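/- Let C ∈ ℕ and X = {x, y}. Let I(μ) = μ̄ be a parameter interpretation with 0 < frac(μ̄) and frac(μ̄) ≠ 1/2, and let ξ = v_0 v_1 ... be a (possibly infinite) one-reset sequence of clock valuations. For every interpretation Î(μ) = μ̂ with ⌊μ̂⌋ = ⌊μ̄⌋ and the same polarity as μ̄, and for every valuation v̂_0 that is in complete agreement with v_0 (with respect to μ̄, μ̂ and C), there exists a one-reset sequence of valuations ξ̂ = v̂_0 v̂_1 ... (of the same length, starting from v̂_0) such that for every position i ≥ 1 in the sequence, v_i and v̂_i are in agreement for interpretations I, Î. -/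

import Mathlib

/-- `ℓ_μ = min(frac μ, 1 - frac μ)`. -/
noncomputable def ellVal (μ : ℝ) : ℝ := min (Int.fract μ) (1 - Int.fract μ)

/-- The `k`-th of the six intervals associated with a parameter value `μ`:
`{0}, (0, ℓ_μ), {ℓ_μ}, (ℓ_μ, 1 - ℓ_μ), {1 - ℓ_μ}, (1 - ℓ_μ, 1)`. -/
def inInterval (μ : ℝ) (k : ℕ) (r : ℝ) : Prop :=
  match k with
  | 0 => r = 0
  | 1 => 0 < r ∧ r < ellVal μ
  | 2 => r = ellVal μ
  | 3 => ellVal μ < r ∧ r < 1 - ellVal μ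
  | 4 => r = 1 - ellVal μ
  | 5 => 1 - ellVal μ < r ∧ r < 1
  | _ => False

/-- Valuations `v, w` over two clocks are in agreement for interpretations `μ₁, μ₂`
(w.r.t. constant `C`): they satisfy the same constraints `z ∼ c` (`c ≤ 2C`) and
`z ∼ μ₁` resp. `z ∼ μ₂`, for `∼ ∈ {<, =}`. -/
def Agree2 (C : ℕ) (μ₁ μ₂ : ℝ) (v w : Fin 2 → ℝ) : Prop :=
  ∀ z : Fin 2,
    (∀ c : ℕ, c ≤ 2 * C →
      ((v z < (c : ℝ) ↔ w z < (c : ℝ)) ∧ (v z = (c : ℝ) ↔ w z = (c : ℝ)))) ∧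
    (v z < μ₁ ↔ w z < μ₂) ∧ (v z = μ₁ ↔ w z = μ₂)

/-- Complete agreement: agreement, both valuations bounded by `2C`, and for each clock
the fractional parts lie in corresponding intervals associated with `μ₁`, `μ₂`. -/
def CompleteAgree (C : ℕ) (μ₁ μ₂ : ℝ) (v w : Fin 2 → ℝ) : Prop :=
  Agree2 C μ₁ μ₂ v w ∧
  ∀ z : Fin 2, v z ≤ 2 * C ∧ w z ≤ 2 * C ∧
    ∀ k : ℕ, inInterval μ₁ k (Int.fract (v z)) ↔ inInterval μ₂ k (Int.fract (w z))


/-- order relation on knot pairs -/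
def Rlt (p q : ℝ × ℝ) : Prop := p.1 < q.1 ∧ p.2 < q.2

instance : IsTrans (ℝ × ℝ) Rlt := ⟨fun _ _ _ h h' => ⟨h.1.trans h'.1, h.2.trans h'.2⟩⟩

open Classical in
/-- piecewise-linear interpolation through a list of knots -/
noncomputable def pl : List (ℝ × ℝ) → ℝ → ℝ
  | [], t => t
  | [(a, b)], t => t - a + b
  | (a, b) :: (c, d) :: l, t =>
      if t < c then b + (t - a) * ((d - b) / (c - a)) else pl ((c, d) :: l) t

lemma pl_eval (L : List (ℝ × ℝ)) (hL : List.Chain' Rlt L) : ∀ p ∈ L, pl L p.1 = p.2 := by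
  induction L with
  | nil => simp
  | cons hd tl ih =>
    obtain ⟨a, b⟩ := hd
    rcases tl with _ | ⟨⟨c, d⟩, l⟩
    · intro p hp
      simp at hp; subst hp; simp [pl]
    · have hac : a < c := (List.isChain_cons_cons.mp hL).1.1
      have htail : List.Chain' Rlt ((c, d) :: l) := (List.isChain_cons_cons.mp hL).2
      intro p hp
      rcases List.mem_cons.mp hp with hp | hp
      · subst hp; simp [pl, hac]
      · have hle : c ≤ p.1 := by
          rcases List.mem_cons.mp hp with hp2 | hp2
          · simp [hp2]
          · have hpw := List.isChain_iff_pairwise.mp htail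
            exact (List.rel_of_pairwise_cons hpw hp2).1.le
        have hnot : ¬ p.1 < c := not_lt.mpr hle
        simp only [pl, if_neg hnot]
        exact ih htail p hp

lemma pl_strictMono (L : List (ℝ × ℝ)) (hL : List.Chain' Rlt L) : StrictMono (pl L) := by
  induction L with
  | nil => exact fun _ _ h => by simpa [pl] using h
  | cons hd tl ih =>
    obtain ⟨a, b⟩ := hd
    rcases tl with _ | ⟨⟨c, d⟩, l⟩
    · exact fun x y h => by simp only [pl]; linarith
    · have hR : Rlt (a, b) (c, d) := (List.isChain_cons_cons.mp hL).1
      have hac : a < c := hR.1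
      have hbd : b < d := hR.2
      have htail : List.Chain' Rlt ((c, d) :: l) := (List.isChain_cons_cons.mp hL).2
      have hmt := ih htail
      have hvc : pl ((c, d) :: l) c = d := pl_eval _ htail (c, d) (by simp)
      have hslope : 0 < (d - b) / (c - a) := div_pos (by linarith) (by linarith)
      intro x y hxy
      simp only [pl]
      by_cases hy : y < c
      · have hx : x < c := hxy.trans hy
        rw [if_pos hx, if_pos hy]
        have := mul_lt_mul_of_pos_right (show x - a < y - a by linarith) hslope
        linarith
      · rw [if_neg hy]
        have h2 : d ≤ pl ((c, d) :: l) y := by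
          have h3 : pl ((c, d) :: l) c ≤ pl ((c, d) :: l) y := hmt.monotone (not_lt.mp hy)
          rwa [hvc] at h3
        by_cases hx : x < c
        · rw [if_pos hx]
          have h4 := mul_lt_mul_of_pos_right (show x - a < c - a by linarith) hslope
          have he : (c - a) * ((d - b) / (c - a)) = d - b := by
            rw [mul_comm]; exact div_mul_cancel₀ _ (by linarith)
          linarith
        · rw [if_neg hx]
          exact hmt hxy
lemma pl3_spec (a a' : ℝ) (h1 : 0 < a) (h2 : a < 1) (h1' : 0 < a') (h2' : a' < 1) :
    StrictMono (pl [(0,0),(a,a'),(1,1)]) ∧ pl [(0,0),(a,a'),(1,1)] 0 = 0 ∧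
      pl [(0,0),(a,a'),(1,1)] a = a' ∧ pl [(0,0),(a,a'),(1,1)] 1 = 1 := by
  have hc : List.Chain' Rlt [(0,0),(a,a'),(1,1)] := by
    simp [List.Chain', List.isChain_cons_cons, Rlt]; refine ⟨⟨h1, h1'⟩, h2, h2'⟩
  exact ⟨pl_strictMono _ hc,
    pl_eval _ hc (0,0) (by simp), pl_eval _ hc (a,a') (by simp), pl_eval _ hc (1,1) (by simp)⟩

lemma pl4_spec (a b a' b' : ℝ) (h1 : 0 < a) (h2 : a < b) (h3 : b < 1)
    (h1' : 0 < a') (h2' : a' < b') (h3' : b' < 1) :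
    StrictMono (pl [(0,0),(a,a'),(b,b'),(1,1)]) ∧ pl [(0,0),(a,a'),(b,b'),(1,1)] 0 = 0 ∧
      pl [(0,0),(a,a'),(b,b'),(1,1)] a = a' ∧ pl [(0,0),(a,a'),(b,b'),(1,1)] b = b' ∧
      pl [(0,0),(a,a'),(b,b'),(1,1)] 1 = 1 := by
  have hc : List.Chain' Rlt [(0,0),(a,a'),(b,b'),(1,1)] := by
    simp [List.Chain', List.isChain_cons_cons, Rlt]; exact ⟨⟨h1, h1'⟩, ⟨h2, h2'⟩, h3, h3'⟩
  exact ⟨pl_strictMono _ hc, pl_eval _ hc (0,0) (by simp), pl_eval _ hc (a,a') (by simp),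
    pl_eval _ hc (b,b') (by simp), pl_eval _ hc (1,1) (by simp)⟩

lemma pl5_spec (a b c a' b' c' : ℝ) (h1 : 0 < a) (h2 : a < b) (h3 : b < c) (h4 : c < 1)
    (h1' : 0 < a') (h2' : a' < b') (h3' : b' < c') (h4' : c' < 1) :
    StrictMono (pl [(0,0),(a,a'),(b,b'),(c,c'),(1,1)]) ∧
      pl [(0,0),(a,a'),(b,b'),(c,c'),(1,1)] 0 = 0 ∧
      pl [(0,0),(a,a'),(b,b'),(c,c'),(1,1)] a = a' ∧
      pl [(0,0),(a,a'),(b,b'),(c,c'),(1,1)] b = b' ∧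
      pl [(0,0),(a,a'),(b,b'),(c,c'),(1,1)] c = c' ∧
      pl [(0,0),(a,a'),(b,b'),(c,c'),(1,1)] 1 = 1 := by
  have hc : List.Chain' Rlt [(0,0),(a,a'),(b,b'),(c,c'),(1,1)] := by
    simp [List.Chain', List.isChain_cons_cons, Rlt]; exact ⟨⟨h1, h1'⟩, ⟨h2, h2'⟩, ⟨h3, h3'⟩, h4, h4'⟩
  exact ⟨pl_strictMono _ hc, pl_eval _ hc (0,0) (by simp), pl_eval _ hc (a,a') (by simp),
    pl_eval _ hc (b,b') (by simp), pl_eval _ hc (c,c') (by simp), pl_eval _ hc (1,1) (by simp)⟩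
lemma exists_g (f₁ f₂ α β : ℝ)
    (hf₁ : 0 < f₁) (hf₁1 : f₁ < 1) (hf₂ : 0 < f₂) (hf₂1 : f₂ < 1)
    (hpol : (1/2 < f₁ ∧ 1/2 < f₂) ∨ (f₁ < 1/2 ∧ f₂ < 1/2))
    (hα0 : 0 ≤ α) (hα1 : α < 1) (hβ0 : 0 ≤ β) (hβ1 : β < 1)
    (i0 : α = 0 ↔ β = 0)
    (i1 : (0 < α ∧ α < min f₁ (1-f₁)) ↔ (0 < β ∧ β < min f₂ (1-f₂)))
    (i2 : α = min f₁ (1-f₁) ↔ β = min f₂ (1-f₂))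
    (i3 : (min f₁ (1-f₁) < α ∧ α < 1 - min f₁ (1-f₁)) ↔
          (min f₂ (1-f₂) < β ∧ β < 1 - min f₂ (1-f₂)))
    (i4 : α = 1 - min f₁ (1-f₁) ↔ β = 1 - min f₂ (1-f₂))
    (i5 : (1 - min f₁ (1-f₁) < α ∧ α < 1) ↔ (1 - min f₂ (1-f₂) < β ∧ β < 1)) :
    ∃ g : ℝ → ℝ, StrictMono g ∧ g 0 = 0 ∧ g 1 = 1 ∧ g f₁ = f₂ ∧
      (0 < α → g (1-α) = 1-β) ∧ (α < f₁ ↔ β < f₂) ∧ (α = f₁ ↔ β = f₂) ∧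
      (α < f₁ → g (f₁-α) = f₂-β) ∧ (f₁ < α → g (1+f₁-α) = 1+f₂-β) := by
  rcases eq_or_lt_of_le hα0 with hz | hz
  · -- α = 0, β = 0
    have hαz : α = 0 := hz.symm
    have hβz : β = 0 := i0.mp hαz
    obtain ⟨hm, hg0, hga, hg1⟩ := pl3_spec f₁ f₂ hf₁ hf₁1 hf₂ hf₂1
    refine ⟨_, hm, hg0, hg1, hga, ?_, ?_, ?_, ?_, ?_⟩
    · intro h; linarith
    · constructor <;> intro <;> linarith
    · constructor <;> intro <;> exfalso <;> linarith
    · intro _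
      rw [show f₁ - α = f₁ by linarith, show f₂ - β = f₂ by linarith]; exact hga
    · intro h; linarith
  rcases hpol with ⟨hp1, hp2⟩ | ⟨hp1, hp2⟩
  · -- positive polarity: min f (1-f) = 1-f
    have e1 : min f₁ (1-f₁) = 1-f₁ := min_eq_right (by linarith)
    have e2 : min f₂ (1-f₂) = 1-f₂ := min_eq_right (by linarith)
    rw [e1] at i1 i2 i3 i4 i5
    rw [e2] at i1 i2 i3 i4 i5
    rcases lt_trichotomy α (1-f₁) with hc | hc | hc
    · -- P1 : 0 < α < 1-f₁
      obtain ⟨hb1, hb2⟩ := i1.mp ⟨hz, hc⟩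
      obtain ⟨hm, hg0, hga, hgb, hgc, hg1⟩ :=
        pl5_spec (f₁-α) f₁ (1-α) (f₂-β) f₂ (1-β)
          (by linarith) (by linarith) (by linarith) (by linarith)
          (by linarith) (by linarith) (by linarith) (by linarith)
      refine ⟨_, hm, hg0, hg1, hgb, fun _ => hgc, ?_, ?_, fun _ => hga, fun h => by linarith⟩
      · constructor <;> intro <;> linarith
      · constructor <;> intro <;> exfalso <;> linarith
    · -- P2 : α = 1-f₁, β = 1-f₂
      have hβc : β = 1-f₂ := i2.mp hc
      obtain ⟨hm, hg0, hga, hgb, hg1⟩ :=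
        pl4_spec (f₁-α) f₁ (f₂-β) f₂
          (by linarith) (by linarith) (by linarith)
          (by linarith) (by linarith) (by linarith)
      refine ⟨_, hm, hg0, hg1, hgb, ?_, ?_, ?_, fun _ => hga, fun h => by linarith⟩
      · intro _
        rw [show (1-α : ℝ) = f₁ by linarith, show (1-β : ℝ) = f₂ by linarith]; exact hgb
      · constructor <;> intro <;> linarith
      · constructor <;> intro <;> exfalso <;> linarith
    · -- α > 1-f₁
      rcases lt_trichotomy α f₁ with hd | hd | hd
      · -- P3 : 1-f₁ < α < f₁
        obtain ⟨hb1, hb2⟩ := i3.mp ⟨hc, by linarith⟩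
        obtain ⟨hm, hg0, hga, hgb, hgc, hg1⟩ :=
          pl5_spec (f₁-α) (1-α) f₁ (f₂-β) (1-β) f₂
            (by linarith) (by linarith) (by linarith) (by linarith)
            (by linarith) (by linarith) (by linarith) (by linarith)
        refine ⟨_, hm, hg0, hg1, hgc, fun _ => hgb, ?_, ?_, fun _ => hga, fun h => by linarith⟩
        · constructor <;> intro <;> linarith
        · constructor <;> intro <;> exfalso <;> linarith
      · -- P4 : α = f₁, β = f₂
        have hβc : β = f₂ := by have h5 := i4.mp (by rw [hd]; ring); linarith
        obtain ⟨hm, hg0, hga, hgb, hg1⟩ :=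
          pl4_spec (1-α) f₁ (1-β) f₂
            (by linarith) (by linarith) (by linarith)
            (by linarith) (by linarith) (by linarith)
        refine ⟨_, hm, hg0, hg1, hgb, fun _ => hga, ?_, ?_,
          fun h => by linarith, fun h => by linarith⟩
        · constructor <;> intro <;> exfalso <;> linarith
        · constructor <;> intro <;> [exact hβc; exact hd]
      · -- P5 : f₁ < α < 1
        obtain ⟨hb1, hb2⟩ := i5.mp ⟨by linarith, hα1⟩
        obtain ⟨hm, hg0, hga, hgb, hgc, hg1⟩ :=
          pl5_spec (1-α) f₁ (1+f₁-α) (1-β) f₂ (1+f₂-β)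
            (by linarith) (by linarith) (by linarith) (by linarith)
            (by linarith) (by linarith) (by linarith) (by linarith)
        refine ⟨_, hm, hg0, hg1, hgb, fun _ => hga, ?_, ?_,
          fun h => by linarith, fun _ => hgc⟩
        · constructor <;> intro <;> exfalso <;> linarith
        · constructor <;> intro <;> exfalso <;> linarith
  · -- negative polarity: min f (1-f) = f
    have e1 : min f₁ (1-f₁) = f₁ := min_eq_left (by linarith)
    have e2 : min f₂ (1-f₂) = f₂ := min_eq_left (by linarith)
    rw [e1] at i1 i2 i3 i4 i5
    rw [e2] at i1 i2 i3 i4 i5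
    rcases lt_trichotomy α f₁ with hc | hc | hc
    · -- N1 : 0 < α < f₁
      obtain ⟨hb1, hb2⟩ := i1.mp ⟨hz, hc⟩
      obtain ⟨hm, hg0, hga, hgb, hgc, hg1⟩ :=
        pl5_spec (f₁-α) f₁ (1-α) (f₂-β) f₂ (1-β)
          (by linarith) (by linarith) (by linarith) (by linarith)
          (by linarith) (by linarith) (by linarith) (by linarith)
      refine ⟨_, hm, hg0, hg1, hgb, fun _ => hgc, ?_, ?_, fun _ => hga, fun h => by linarith⟩
      · constructor <;> intro <;> linarith
      · constructor <;> intro <;> exfalso <;> linarith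
    · -- N2 : α = f₁, β = f₂
      have hβc : β = f₂ := i2.mp hc
      obtain ⟨hm, hg0, hga, hgb, hg1⟩ :=
        pl4_spec f₁ (1-α) f₂ (1-β)
          (by linarith) (by linarith) (by linarith)
          (by linarith) (by linarith) (by linarith)
      refine ⟨_, hm, hg0, hg1, hga, fun _ => hgb, ?_, ?_,
        fun h => by linarith, fun h => by linarith⟩
      · constructor <;> intro <;> exfalso <;> linarith
      · constructor <;> intro <;> [exact hβc; exact hc]
    · -- α > f₁
      rcases lt_trichotomy α (1-f₁) with hd | hd | hd
      · -- N3 : f₁ < α < 1-f₁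
        obtain ⟨hb1, hb2⟩ := i3.mp ⟨hc, hd⟩
        obtain ⟨hm, hg0, hga, hgb, hgc, hg1⟩ :=
          pl5_spec f₁ (1-α) (1+f₁-α) f₂ (1-β) (1+f₂-β)
            (by linarith) (by linarith) (by linarith) (by linarith)
            (by linarith) (by linarith) (by linarith) (by linarith)
        refine ⟨_, hm, hg0, hg1, hga, fun _ => hgb, ?_, ?_,
          fun h => by linarith, fun _ => hgc⟩
        · constructor <;> intro <;> exfalso <;> linarith
        · constructor <;> intro <;> exfalso <;> linarith
      · -- N4 : α = 1-f₁, β = 1-f₂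
        have hβc : β = 1-f₂ := i4.mp hd
        obtain ⟨hm, hg0, hga, hgb, hg1⟩ :=
          pl4_spec f₁ (1+f₁-α) f₂ (1+f₂-β)
            (by linarith) (by linarith) (by linarith)
            (by linarith) (by linarith) (by linarith)
        refine ⟨_, hm, hg0, hg1, hga, ?_, ?_, ?_,
          fun h => by linarith, fun _ => hgb⟩
        · intro _
          rw [show (1-α : ℝ) = f₁ by linarith, show (1-β : ℝ) = f₂ by linarith]; exact hga
        · constructor <;> intro <;> exfalso <;> linarith
        · constructor <;> intro <;> exfalso <;> linarith
      · -- N5 : 1-f₁ < α < 1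
        obtain ⟨hb1, hb2⟩ := i5.mp ⟨hd, hα1⟩
        obtain ⟨hm, hg0, hga, hgb, hgc, hg1⟩ :=
          pl5_spec (1-α) f₁ (1+f₁-α) (1-β) f₂ (1+f₂-β)
            (by linarith) (by linarith) (by linarith) (by linarith)
            (by linarith) (by linarith) (by linarith) (by linarith)
        refine ⟨_, hm, hg0, hg1, hgb, fun _ => hga, ?_, ?_,
          fun h => by linarith, fun _ => hgc⟩
        · constructor <;> intro <;> exfalso <;> linarith
        · constructor <;> intro <;> exfalso <;> linarith
lemma floor_le_of_agree (C : ℕ) (a b : ℝ) (ha0 : 0 ≤ a) (ha2 : a ≤ 2*C)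
    (hag : ∀ c : ℕ, c ≤ 2*C → (a < (c:ℝ) ↔ b < (c:ℝ))) : ⌊a⌋ ≤ ⌊b⌋ := by
  have h0 : 0 ≤ ⌊a⌋ := Int.floor_nonneg.mpr ha0
  have hcast : ((⌊a⌋.toNat : ℕ) : ℝ) = ((⌊a⌋ : ℤ) : ℝ) := by exact_mod_cast Int.toNat_of_nonneg h0
  have hn2C : ⌊a⌋.toNat ≤ 2*C := by
    have h1 : ((⌊a⌋.toNat : ℕ) : ℝ) ≤ 2*C := by rw [hcast]; exact le_trans (Int.floor_le a) ha2
    exact_mod_cast h1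
  have h1 : ¬ a < (⌊a⌋.toNat : ℝ) := by rw [hcast]; exact not_lt.mpr (Int.floor_le a)
  have h2 : ((⌊a⌋.toNat : ℕ) : ℝ) ≤ b := not_lt.mp (fun h => h1 ((hag _ hn2C).mpr h))
  rw [hcast] at h2
  exact Int.le_floor.mpr h2

/-- Lemma (agreement): let `μ₁` be a parameter value and `v` a (possibly infinite, of
length `N ∈ ℕ∞`) one-reset sequence of valuations.  For every parameter value `μ₂`
with the same integer part and the same polarity as `μ₁`, and every valuation `w0` in
complete agreement with `v 0`, there is a one-reset sequence `w` of the same length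
starting at `w0` such that for every position `i ≥ 1` of the sequence, `v i` and
`w i` are in agreement for interpretations `μ₁, μ₂`. -/
theorem one_reset_sequence_agreement
    (C : ℕ) (μ₁ μ₂ : ℝ) (hμ₁ : 0 < μ₁) (hμ₂ : 0 < μ₂)
    (hf₁pos : 0 < Int.fract μ₁) (hf₁half : Int.fract μ₁ ≠ 1 / 2)
    (hf₂pos : 0 < Int.fract μ₂) (hf₂half : Int.fract μ₂ ≠ 1 / 2)
    (hfloor : ⌊μ₂⌋ = ⌊μ₁⌋)
    (hpol : (1 / 2 < Int.fract μ₁ ∧ 1 / 2 < Int.fract μ₂) ∨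
            (Int.fract μ₁ < 1 / 2 ∧ Int.fract μ₂ < 1 / 2))
    (N : ℕ∞) (hN : 1 ≤ N)
    (v : ℕ → Fin 2 → ℝ) (hnn : ∀ i z, 0 ≤ v i z)
    (h0 : ∃ z, v 0 z = 0)
    (hstep : ∀ i : ℕ, ((i : ℕ∞) + 1) < N →
      ∃ δ : ℝ, 0 < δ ∧ ∀ z, v (i + 1) z = v i z + δ)
    (w0 : Fin 2 → ℝ) (hw0nn : ∀ z, 0 ≤ w0 z)
    (hca : CompleteAgree C μ₁ μ₂ (v 0) w0) :
    ∃ w : ℕ → Fin 2 → ℝ, w 0 = w0 ∧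
      (∀ i : ℕ, ((i : ℕ∞) + 1) < N →
        ∃ δ : ℝ, 0 < δ ∧ ∀ z, w (i + 1) z = w i z + δ) ∧
      (∀ i : ℕ, 1 ≤ i → (i : ℕ∞) < N → Agree2 C μ₁ μ₂ (v i) (w i)) := by
  classical
  obtain ⟨z₀, hz₀⟩ := h0
  obtain ⟨z₁, hne, hz⟩ : ∃ z₁ : Fin 2, z₁ ≠ z₀ ∧ ∀ z : Fin 2, z = z₀ ∨ z = z₁ := by
    fin_cases z₀
    · exact ⟨1, by decide, by decide⟩
    · exact ⟨0, by decide, by decide⟩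
  have hne' : ¬ z₀ = z₁ := fun h => hne h.symm
  obtain ⟨hag, hcomp⟩ := hca
  set t0 : ℝ := v 0 z₁ with ht0def
  set s0 : ℝ := w0 z₁ with hs0def
  have ht0nn : 0 ≤ t0 := hnn 0 z₁
  have hs0nn : 0 ≤ s0 := hw0nn z₁
  have ht02C : t0 ≤ 2*C := (hcomp z₁).1
  have hs02C : s0 ≤ 2*C := (hcomp z₁).2.1
  have hfl : ⌊s0⌋ = ⌊t0⌋ := by
    refine le_antisymm ?_ ?_
    · exact floor_le_of_agree C s0 t0 hs0nn hs02C (fun c hc => ((hag z₁).1 c hc).1.symm)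
    · exact floor_le_of_agree C t0 s0 ht0nn ht02C (fun c hc => ((hag z₁).1 c hc).1)
  have hks := (hcomp z₁).2.2
  -- the six interval correspondences
  have i0 : Int.fract t0 = 0 ↔ Int.fract s0 = 0 := by simpa [inInterval] using hks 0
  obtain ⟨g, hm, hg0, hg1, hgf, hgα, hglt, hgeq, hγ1, hγ2⟩ :=
    exists_g (Int.fract μ₁) (Int.fract μ₂) (Int.fract t0) (Int.fract s0)
      hf₁pos (Int.fract_lt_one μ₁) hf₂pos (Int.fract_lt_one μ₂) hpol
      (Int.fract_nonneg t0) (Int.fract_lt_one t0)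
      (Int.fract_nonneg s0) (Int.fract_lt_one s0)
      i0
      (by simpa [inInterval, ellVal] using hks 1)
      (by simpa [inInterval, ellVal] using hks 2)
      (by simpa [inInterval, ellVal] using hks 3)
      (by simpa [inInterval, ellVal] using hks 4)
      (by simpa [inInterval, ellVal] using hks 5)
  set h2 : ℝ → ℝ := fun u => (⌊u⌋ : ℝ) + g (Int.fract u) with hh2
  have h2mono : StrictMono h2 := by
    intro u u' h
    show (⌊u⌋ : ℝ) + g (Int.fract u) < (⌊u'⌋ : ℝ) + g (Int.fract u')
    rcases eq_or_lt_of_le (Int.floor_mono h.le) with hfe | hfe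
    · have hfr : Int.fract u < Int.fract u' := by
        have e1 : Int.fract u = u - (⌊u⌋:ℝ) := rfl
        have e2 : Int.fract u' = u' - (⌊u'⌋:ℝ) := rfl
        rw [e1, e2, ← hfe]; linarith
      rw [hfe]; exact add_lt_add_right (hm hfr) _
    · have hlt1 : g (Int.fract u) < 1 := by rw [← hg1]; exact hm (Int.fract_lt_one u)
      have hge0 : 0 ≤ g (Int.fract u') := by rw [← hg0]; exact hm.monotone (Int.fract_nonneg u')
      have hc : (⌊u⌋ : ℝ) + 1 ≤ (⌊u'⌋ : ℝ) := by exact_mod_cast hfe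
      linarith
  have h2add : ∀ (u : ℝ) (n : ℤ), h2 (u + n) = h2 u + n := by
    intro u n
    show (⌊u + n⌋:ℝ) + g (Int.fract (u + n)) = (⌊u⌋:ℝ) + g (Int.fract u) + n
    rw [Int.fract_add_intCast, Int.floor_add_intCast]; push_cast; ring
  have h2zero : h2 0 = 0 := by
    show (⌊(0:ℝ)⌋:ℝ) + g (Int.fract 0) = 0
    simp [hg0]
  have h2negα : h2 (-Int.fract t0) = -Int.fract s0 := by
    rcases eq_or_lt_of_le (Int.fract_nonneg t0) with h | h
    · rw [← h, i0.mp h.symm, neg_zero, h2zero]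
    · have hfl1 : ⌊-Int.fract t0⌋ = -1 := by
        rw [Int.floor_eq_iff]
        constructor
        · push_cast; have := Int.fract_lt_one t0; linarith
        · push_cast; linarith
      have hfr1 : Int.fract (-Int.fract t0) = 1 - Int.fract t0 := by
        have e1 : Int.fract (-Int.fract t0) = -Int.fract t0 - (⌊-Int.fract t0⌋:ℝ) := rfl
        rw [e1, hfl1]; push_cast; ring
      show (⌊-Int.fract t0⌋:ℝ) + g (Int.fract (-Int.fract t0)) = -Int.fract s0
      rw [hfl1, hfr1, hgα h]; push_cast; ring
  have h2fα : h2 (Int.fract μ₁ - Int.fract t0) = Int.fract μ₂ - Int.fract s0 := by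
    rcases lt_trichotomy (Int.fract t0) (Int.fract μ₁) with h | h | h
    · have hb : Int.fract μ₂ - Int.fract s0 > 0 := by
        have := hglt.mp h; linarith
      have hfl1 : ⌊Int.fract μ₁ - Int.fract t0⌋ = 0 := by
        rw [Int.floor_eq_iff]
        constructor
        · push_cast; linarith
        · push_cast; have := Int.fract_lt_one μ₁; have := Int.fract_nonneg t0; linarith
      have hfr1 : Int.fract (Int.fract μ₁ - Int.fract t0) = Int.fract μ₁ - Int.fract t0 := by
        have e1 : Int.fract (Int.fract μ₁ - Int.fract t0)
            = Int.fract μ₁ - Int.fract t0 - (⌊Int.fract μ₁ - Int.fract t0⌋:ℝ) := rfl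
        rw [e1, hfl1]; push_cast; ring
      show (⌊Int.fract μ₁ - Int.fract t0⌋:ℝ) + g (Int.fract (Int.fract μ₁ - Int.fract t0)) = _
      rw [hfl1, hfr1, hγ1 h]; push_cast; ring
    · have hb : Int.fract s0 = Int.fract μ₂ := hgeq.mp h
      rw [← h, sub_self, h2zero]; linarith
    · have hb := hglt.not.mp (not_lt.mpr h.le)
      have hb2 : Int.fract μ₂ ≤ Int.fract s0 := not_lt.mp hb
      have hb3 : Int.fract μ₂ < Int.fract s0 := by
        rcases eq_or_lt_of_le hb2 with he | he
        · exfalso; exact absurd (hgeq.mpr he.symm) (ne_of_gt h)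
        · exact he
      have hfl1 : ⌊Int.fract μ₁ - Int.fract t0⌋ = -1 := by
        rw [Int.floor_eq_iff]
        constructor
        · push_cast; have := Int.fract_lt_one t0; have := Int.fract_nonneg μ₁; linarith
        · push_cast; linarith
      have hfr1 : Int.fract (Int.fract μ₁ - Int.fract t0)
          = 1 + Int.fract μ₁ - Int.fract t0 := by
        have e1 : Int.fract (Int.fract μ₁ - Int.fract t0)
            = Int.fract μ₁ - Int.fract t0 - (⌊Int.fract μ₁ - Int.fract t0⌋:ℝ) := rfl
        rw [e1, hfl1]; push_cast; ring
      show (⌊Int.fract μ₁ - Int.fract t0⌋:ℝ) + g (Int.fract (Int.fract μ₁ - Int.fract t0)) = _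
      rw [hfl1, hfr1, hγ2 h]; push_cast; ring
  have ht0split : (⌊t0⌋:ℝ) + Int.fract t0 = t0 := Int.floor_add_fract t0
  have hs0split : (⌊s0⌋:ℝ) + Int.fract s0 = s0 := Int.floor_add_fract s0
  have hμ₁split : (⌊μ₁⌋:ℝ) + Int.fract μ₁ = μ₁ := Int.floor_add_fract μ₁
  have hμ₂split : (⌊μ₂⌋:ℝ) + Int.fract μ₂ = μ₂ := Int.floor_add_fract μ₂
  have h2t0 : h2 (-t0) = -s0 := by
    have e1 : -t0 = -Int.fract t0 + ((-⌊t0⌋ : ℤ):ℝ) := by push_cast; linarith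
    rw [e1, h2add, h2negα]
    rw [hfl] at hs0split
    push_cast; linarith
  have h2mu : h2 μ₁ = μ₂ := by
    have e1 : μ₁ = Int.fract μ₁ + ((⌊μ₁⌋ : ℤ):ℝ) := by push_cast; linarith
    have e2 : h2 (Int.fract μ₁) = Int.fract μ₂ := by
      show (⌊Int.fract μ₁⌋:ℝ) + g (Int.fract (Int.fract μ₁)) = Int.fract μ₂
      rw [Int.floor_fract, Int.fract_fract, hgf]; push_cast; ring
    rw [e1, h2add, e2]
    rw [hfloor] at hμ₂split
    push_cast; linarith
  have h2mt0 : h2 (μ₁ - t0) = μ₂ - s0 := by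
    have e1 : μ₁ - t0 = (Int.fract μ₁ - Int.fract t0) + ((⌊μ₁⌋ - ⌊t0⌋ : ℤ):ℝ) := by
      push_cast; linarith
    rw [e1, h2add, h2fα]
    rw [hfloor] at hμ₂split
    rw [hfl] at hs0split
    push_cast; linarith
  -- the global simulation map
  set F : ℝ → ℝ := fun t => s0 + h2 (t - t0) with hF
  have hFmono : StrictMono F := fun a b h =>
    add_lt_add_right (h2mono (sub_lt_sub_right h t0)) s0
  have hFt0 : F t0 = s0 := by
    show s0 + h2 (t0 - t0) = s0
    rw [sub_self, h2zero]; ring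
  have hFc : ∀ c : ℕ, F (c:ℝ) = (c:ℝ) := by
    intro c
    show s0 + h2 ((c:ℝ) - t0) = (c:ℝ)
    have e1 : (c:ℝ) - t0 = -t0 + ((c:ℤ):ℝ) := by push_cast; ring
    rw [e1, h2add, h2t0]; push_cast; ring
  have hFtc : ∀ c : ℕ, F (t0 + (c:ℝ)) = s0 + (c:ℝ) := by
    intro c
    show s0 + h2 (t0 + (c:ℝ) - t0) = s0 + (c:ℝ)
    have e1 : t0 + (c:ℝ) - t0 = 0 + ((c:ℤ):ℝ) := by push_cast; ring
    rw [e1, h2add, h2zero]; push_cast; ring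
  have hFmu : F μ₁ = μ₂ := by
    show s0 + h2 (μ₁ - t0) = μ₂
    rw [h2mt0]; ring
  have hFtmu : F (t0 + μ₁) = s0 + μ₂ := by
    show s0 + h2 (t0 + μ₁ - t0) = s0 + μ₂
    rw [show t0 + μ₁ - t0 = μ₁ by ring, h2mu]
  -- difference invariant
  have hdiff : ∀ i : ℕ, (i:ℕ∞) < N → v i z₀ = v i z₁ - t0 := by
    intro i
    induction i with
    | zero => intro _; rw [hz₀, ← ht0def]; ring
    | succ i ih =>
      intro hi
      have hi' : ((i:ℕ∞) + 1) < N := by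
        have e : (((i+1 : ℕ)):ℕ∞) = (i:ℕ∞)+1 := by push_cast; ring
        rwa [e] at hi
      have hiN : (i:ℕ∞) < N := lt_of_le_of_lt le_self_add hi'
      obtain ⟨δ, hδ, hδe⟩ := hstep i hi'
      rw [hδe z₀, hδe z₁, ih hiN]; ring
  refine ⟨fun i z => if z = z₁ then F (v i z₁) else F (v i z₁) - s0, ?_, ?_, ?_⟩
  · -- initial condition
    funext z
    have hw00 : w0 z₀ = 0 := by
      have h00 := ((hag z₀).1 0 (Nat.zero_le _)).2
      simp only [Nat.cast_zero] at h00
      exact h00.mp hz₀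
    rcases hz z with h | h <;> rw [h]
    · simp only [if_neg hne']
      rw [← ht0def, hFt0, hw00]; ring
    · simp only [if_pos rfl, if_true]
      rw [← ht0def, hFt0]
  · -- one-reset sequence steps
    intro i hi
    obtain ⟨δ, hδ, hδe⟩ := hstep i hi
    refine ⟨F (v (i+1) z₁) - F (v i z₁), ?_, ?_⟩
    · have h' : v i z₁ < v (i+1) z₁ := by rw [hδe z₁]; linarith
      have := hFmono h'; linarith
    · intro z
      rcases hz z with h | h <;> rw [h]
      · simp only [if_neg hne']; ring
      · simp only [if_pos rfl, if_true]; ring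
  · -- agreement
    intro i _ hiN z
    have hvd : v i z₀ = v i z₁ - t0 := hdiff i hiN
    rcases hz z with h | h
    · -- clock z₀ : value v i z₁ - t0 vs F (v i z₁) - s0
      rw [h]
      simp only [if_neg hne']
      rw [hvd]
      refine ⟨fun c _ => ⟨?_, ?_⟩, ?_, ?_⟩
      · constructor
        · intro h
          have h2' : v i z₁ < t0 + (c:ℝ) := by linarith
          have h3 := hFmono h2'
          rw [hFtc c] at h3; linarith
        · intro h
          have h2' : F (v i z₁) < F (t0 + (c:ℝ)) := by rw [hFtc c]; linarith
          have h3 := hFmono.lt_iff_lt.mp h2'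
          linarith
      · constructor
        · intro h
          have h2' : v i z₁ = t0 + (c:ℝ) := by linarith
          rw [h2', hFtc c]; ring
        · intro h
          have h2' : F (v i z₁) = F (t0 + (c:ℝ)) := by rw [hFtc c]; linarith
          have h3 := hFmono.injective h2'
          linarith
      · constructor
        · intro h
          have h2' : v i z₁ < t0 + μ₁ := by linarith
          have h3 := hFmono h2'
          rw [hFtmu] at h3; linarith
        · intro h
          have h2' : F (v i z₁) < F (t0 + μ₁) := by rw [hFtmu]; linarith
          have h3 := hFmono.lt_iff_lt.mp h2'
          linarith
      · constructor
        · intro h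
          have h2' : v i z₁ = t0 + μ₁ := by linarith
          rw [h2', hFtmu]; ring
        · intro h
          have h2' : F (v i z₁) = F (t0 + μ₁) := by rw [hFtmu]; linarith
          have h3 := hFmono.injective h2'
          linarith
    · -- clock z₁ : value v i z₁ vs F (v i z₁)
      rw [h]
      simp only [if_pos rfl, if_true]
      refine ⟨fun c _ => ⟨?_, ?_⟩, ?_, ?_⟩
      · constructor
        · intro h
          have h3 := hFmono h
          rwa [hFc c] at h3
        · intro h
          have h2' : F (v i z₁) < F (c:ℝ) := by rw [hFc c]; exact h
          exact hFmono.lt_iff_lt.mp h2'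
      · constructor
        · intro h; rw [h]; exact hFc c
        · intro h
          exact hFmono.injective (by rw [hFc c]; exact h)
      · constructor
        · intro h
          have h3 := hFmono h
          rwa [hFmu] at h3
        · intro h
          have h2' : F (v i z₁) < F μ₁ := by rw [hFmu]; exact h
          exact hFmono.lt_iff_lt.mp h2'
      · constructor
        · intro h; rw [h]; exact hFmu
        · intro h
          exact hFmono.injective (by rw [hFmu]; exact h)
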